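/- Let k ≥ 1, δ ≥ 0, let 𝒱 ⊆ ℝ^k, let V₁, …, V_m ∈ ℝ^k and α₁, …, α_{m−1} ∈ ℝ, set S := span{V₁, …, V_m}, and let B ⊆ ℝ^k be a subspace orthogonal to S. Assume every v ∈ 𝒱 lies in S + B and the orthogonal projection of v onto B has norm at most √k·δ. Let w′ ∈ ℝ^k satisfy ⟨V₁, w′⟩ = 1 and ⟨αᵢ·V₁ − V_{i+1}, w′⟩ = 0 for every 1 ≤ i ≤ m−1. Then every w ∈ ℝ^k satisfying ⟨V₁, w⟩ = 1, ⟨αᵢ·V₁ − V_{i+1}, w⟩ = 0 for every 1 ≤ i ≤ m−1, and ⟨b, w⟩ = 0 for every b ∈ B, satisfies |⟨w, v⟩ − ⟨w′, v⟩| ≤ √k·δ·‖w′‖ for every v ∈ 𝒱. -/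

import Mathlib

open scoped RealInnerProductSpace

/-- Lemma F.1: any solution w of the exact linear system that is
moreover orthogonal to B induces personalized values √k·δ·‖w′‖-close to those
of w′ on every attainable value vector v ∈ 𝒱. -/
theorem stmt9 (k : ℕ) (hk : 1 ≤ k) (δ : ℝ) (hδ : 0 ≤ δ)
    (𝒱 : Set (EuclideanSpace ℝ (Fin k)))
    (m : ℕ) (V : ℕ → EuclideanSpace ℝ (Fin k)) (α : ℕ → ℝ)
    (B : Submodule ℝ (EuclideanSpace ℝ (Fin k)))
    (hB : ∀ b ∈ B, ∀ s ∈ Submodule.span ℝ (V '' Set.Icc 1 m), ⟪b, s⟫ = 0)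
    (hmem : ∀ v ∈ 𝒱, v ∈ Submodule.span ℝ (V '' Set.Icc 1 m) ⊔ B)
    (hproj : ∀ v ∈ 𝒱,
      ‖(B.orthogonalProjection v : EuclideanSpace ℝ (Fin k))‖ ≤ Real.sqrt k * δ)
    (w' : EuclideanSpace ℝ (Fin k))
    (hw'1 : ⟪V 1, w'⟫ = 1)
    (hw'A : ∀ i, 1 ≤ i → i ≤ m - 1 → ⟪α i • V 1 - V (i + 1), w'⟫ = 0) :
    ∀ w : EuclideanSpace ℝ (Fin k),
      ⟪V 1, w⟫ = 1 →
      (∀ i, 1 ≤ i → i ≤ m - 1 → ⟪α i • V 1 - V (i + 1), w⟫ = 0) →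
      (∀ b ∈ B, ⟪b, w⟫ = 0) →
      ∀ v ∈ 𝒱, |⟪w, v⟫ - ⟪w', v⟫| ≤ Real.sqrt k * δ * ‖w'‖ := by
  intro w hw1 hwA hwB v hv
  obtain ⟨s, hs, b, hb, rfl⟩ := Submodule.mem_sup.mp (hmem v hv)
  -- ⟪V j, w⟫ = ⟪V j, w'⟫ for all j ∈ [1, m]
  have hVeq : ∀ j ∈ Set.Icc 1 m, ⟪V j, w⟫ = ⟪V j, w'⟫ := by
    intro j hj
    obtain ⟨hj1, hjm⟩ := hj
    rcases Nat.lt_or_ge j 2 with h2 | h2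
    · interval_cases j
      rw [hw1, hw'1]
    · obtain ⟨i, rfl⟩ : ∃ i, j = i + 1 := ⟨j - 1, (Nat.succ_pred_eq_of_pos (by omega)).symm⟩
      have hi1 : 1 ≤ i := by omega
      have him : i ≤ m - 1 := by omega
      have h1 := hwA i hi1 him
      have h2 := hw'A i hi1 him
      rw [inner_sub_left, inner_smul_left, sub_eq_zero] at h1 h2
      rw [← h1, ← h2, hw1, hw'1]
  -- hence equality on the span
  have hSeq : ∀ x ∈ Submodule.span ℝ (V '' Set.Icc 1 m), ⟪x, w⟫ = ⟪x, w'⟫ := by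
    intro x hx
    induction hx using Submodule.span_induction with
    | mem x hx =>
      obtain ⟨j, hj, rfl⟩ := hx
      exact hVeq j hj
    | zero => simp
    | add x y _ _ hx hy => rw [inner_add_left, inner_add_left, hx, hy]
    | smul c x _ hx => rw [inner_smul_left, inner_smul_left, hx]
  have hwb : ⟪w, b⟫ = 0 := by rw [real_inner_comm]; exact hwB b hb
  have hws : ⟪w, s⟫ = ⟪w', s⟫ := by
    have h := hSeq s hs
    rw [← real_inner_comm s w, ← real_inner_comm s w'] at h
    exact h
  have hbproj : (B.orthogonalProjection (s + b) : EuclideanSpace ℝ (Fin k)) = b := by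
    rw [← Submodule.starProjection_apply]
    apply Submodule.eq_starProjection_of_mem_of_inner_eq_zero hb
    intro c hc
    have : s + b - b = s := by abel
    rw [this, real_inner_comm]
    exact hB c hc s hs
  have hbnorm : ‖b‖ ≤ Real.sqrt k * δ := by
    have := hproj _ hv
    rwa [hbproj] at this
  have : ⟪w, s + b⟫ - ⟪w', s + b⟫ = -⟪w', b⟫ := by
    rw [inner_add_right, inner_add_right, hwb, hws]; ring
  rw [this, abs_neg]
  calc |⟪w', b⟫| ≤ ‖w'‖ * ‖b‖ := abs_real_inner_le_norm _ _
    _ ≤ ‖w'‖ * (Real.sqrt k * δ) := by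
        exact mul_le_mul_of_nonneg_left hbnorm (norm_nonneg _)
    _ = Real.sqrt k * δ * ‖w'‖ := by ring
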